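/- arXiv:2005.05731 — 11 statements merged into one kernel-verified Lean document; each statement's English description precedes it below -/
import Mathlib

section
/- Let (Q, f) be a triangulation quiver with at least three vertices. Then no g-cycle of length 3 contains a loop; that is, every arrow α with n_α = 3 satisfies s(α) ≠ t(α). -/
/-- A triangulation quiver: a connected 2-regular quiver `(Q₀ = V, Q₁ = A, s, t)`
with at least two vertices, together with a permutation `f` of the arrows with
`t α = s (f α)` and `f³ = id`.  Two-regularity is encoded via the involution
`bar` on arrows (`bar α` is the unique arrow `≠ α` with the same source);
the in-degree condition follows from `f` being a bijection. -/
structure TQ (V A : Type) [Fintype V] [DecidableEq V] [Fintype A] [DecidableEq A] where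
  s : A → V
  t : A → V
  bar : A → A
  bar_ne : ∀ a, bar a ≠ a
  bar_invol : ∀ a, bar (bar a) = a
  s_bar : ∀ a, s (bar a) = s a
  bar_complete : ∀ a b, s b = s a → b = a ∨ b = bar a
  s_surj : ∀ i, ∃ a, s a = i
  f : Equiv.Perm A
  t_eq : ∀ a, t a = s (f a)
  f_cube : ∀ a, f (f (f a)) = a
  connected : ∀ i j : V, Relation.ReflTransGen
      (fun p q => ∃ e, (s e = p ∧ t e = q) ∨ (s e = q ∧ t e = p)) i j
  two_vertices : 2 ≤ Fintype.card V

variable {V A : Type} [Fintype V] [DecidableEq V] [Fintype A] [DecidableEq A]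

/-- The permutation `g` of arrows, `g α = \overline{f α}`. -/
def TQ.g (Q : TQ V A) (a : A) : A := Q.bar (Q.f a)

/-- `n α` is the length of the `g`-cycle of `α`. -/
noncomputable def TQ.n (Q : TQ V A) (a : A) : ℕ := Function.minimalPeriod Q.g a

/-- A loop is an arrow with equal source and target. -/
def TQ.IsLoop (Q : TQ V A) (a : A) : Prop := Q.s a = Q.t a

/-- A weight function: positive integers `m α`, constant on `g`-cycles. -/
structure Weights (Q : TQ V A) where
  m : A → ℕ
  m_pos : ∀ a, 0 < m a
  m_g : ∀ a, m (Q.g a) = m a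

/-- An arrow `α` is virtual if `m α * n α = 2`. -/
def Weights.Virtual {Q : TQ V A} (W : Weights Q) (a : A) : Prop := W.m a * Q.n a = 2

/-- The Assumption: (1) `m α n α ≥ 2` for all `α`; (2) `m α n α ≥ 3` whenever `ᾱ` is
virtual and not a loop; (3) `m α n α ≥ 4` whenever `ᾱ` is virtual and a loop. -/
def Weights.Assumption {Q : TQ V A} (W : Weights Q) : Prop :=
  (∀ a, 2 ≤ W.m a * Q.n a) ∧
  (∀ a, W.Virtual (Q.bar a) → ¬ Q.IsLoop (Q.bar a) → 3 ≤ W.m a * Q.n a) ∧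
  (∀ a, W.Virtual (Q.bar a) → Q.IsLoop (Q.bar a) → 4 ≤ W.m a * Q.n a)

/-- The data of an associative unital `K`-algebra `Λ` generated by pairwise orthogonal
idempotents `e i` summing to `1`, elements `x α ∈ e (s α) * Λ * e (t α)`, and nonzero
parameters `c α ∈ K` constant on `g`-cycles. -/
structure AlgData (Q : TQ V A) (W : Weights Q) (K : Type) [Field K]
    (Λ : Type) [Ring Λ] [Algebra K Λ] where
  e : V → Λ
  x : A → Λ
  c : A → K
  c_ne : ∀ a, c a ≠ 0
  c_g : ∀ a, c (Q.g a) = c a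
  e_orth : ∀ i j, e i * e j = if i = j then e i else 0
  e_sum : ∑ i, e i = 1
  x_sandwich : ∀ a, e (Q.s a) * x a * e (Q.t a) = x a

variable {Q : TQ V A} {W : Weights Q} {K : Type} [Field K] {Λ : Type} [Ring Λ] [Algebra K Λ]

/-- `B α = x_α x_{g α} ⋯ x_{g^{m_α n_α − 1} α}`, the full product along the `g`-cycle. -/
noncomputable def AlgData.B (D : AlgData Q W K Λ) (a : A) : Λ :=
  ((List.range (W.m a * Q.n a)).map (fun k => D.x (Q.g^[k] a))).prod

/-- `A α = x_α x_{g α} ⋯ x_{g^{m_α n_α − 2} α}`, of length `m_α n_α − 1`. -/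
noncomputable def AlgData.Apath (D : AlgData Q W K Λ) (a : A) : Λ :=
  ((List.range (W.m a * Q.n a - 1)).map (fun k => D.x (Q.g^[k] a))).prod

/-- The defining relations (R1), (R2), (R3) of a weighted surface algebra. -/
def AlgData.Rels (D : AlgData Q W K Λ) : Prop :=
  (∀ a, D.x a * D.x (Q.f a) = D.c (Q.bar a) • D.Apath (Q.bar a)) ∧
  (∀ a, ¬ W.Virtual (Q.f (Q.f a)) →
      ¬ (W.Virtual (Q.f (Q.bar a)) ∧ W.m (Q.bar a) = 1 ∧ Q.n (Q.bar a) = 3) →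
      D.x a * D.x (Q.f a) * D.x (Q.g (Q.f a)) = 0) ∧
  (∀ a, ¬ W.Virtual (Q.f a) →
      ¬ (W.Virtual (Q.f (Q.f a)) ∧ W.m (Q.f a) = 1 ∧ Q.n (Q.f a) = 3) →
      D.x a * D.x (Q.g a) * D.x (Q.f (Q.g a)) = 0)

/-- `J`: the two-sided ideal of `Λ` generated by the `x α`, as a `K`-submodule. -/
def AlgData.J (D : AlgData Q W K Λ) : Submodule K Λ :=
  Submodule.span K {z | ∃ (a : A) (u v : Λ), z = u * D.x a * v}

/-- in a triangulation quiver with at least three vertices, no `g`-cycle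
of length 3 contains a loop. -/
theorem stmt3 (Q : TQ V A) (h3 : 3 ≤ Fintype.card V)
    (α : A) (hn : Q.n α = 3) :
    Q.s α ≠ Q.t α := by
  intro hloop
  -- f α has source t α = s α, so f α = α or f α = bar α
  have hsfα : Q.s (Q.f α) = Q.s α := by rw [← Q.t_eq, ← hloop]
  rcases Q.bar_complete α (Q.f α) hsfα with hfα | hfα
  · -- case f α = α
    set β := Q.bar α with hβ
    set γ := Q.f β with hγ
    have hgα : Q.g α = β := by simp [TQ.g, hfα, hβ]
    -- g^[3] α = α
    have hper : Q.g^[3] α = α := by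
      have := Function.iterate_minimalPeriod (f := Q.g) (x := α)
      rwa [show Function.minimalPeriod Q.g α = Q.n α from rfl, hn] at this
    have h3 : Q.g (Q.g (Q.g α)) = α := by
      simpa [Function.iterate_succ_apply'] using hper
    have hgβ : Q.g β = Q.bar γ := by simp [TQ.g, hγ]
    have hfbarγ : Q.f (Q.bar γ) = β := by
      have : Q.bar (Q.f (Q.bar γ)) = α := by
        rw [hgα, hgβ] at h3; exact h3
      have := congrArg Q.bar this
      rwa [Q.bar_invol] at this
    have hfγ : Q.f γ = Q.bar γ := by
      have h1 : Q.f (Q.f (Q.f (Q.bar γ))) = Q.bar γ := Q.f_cube _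
      rw [hfbarγ, ← hγ] at h1
      exact h1
    set i := Q.s α with hi
    set j := Q.s γ with hj
    have hsβ : Q.s β = i := Q.s_bar α
    have hsbarγ : Q.s (Q.bar γ) = j := Q.s_bar γ
    have htα : Q.t α = i := hloop.symm
    have htβ : Q.t β = j := by rw [Q.t_eq, ← hγ]
    have htγ : Q.t γ = j := by rw [Q.t_eq, hfγ, hsbarγ]
    have htbarγ : Q.t (Q.bar γ) = i := by rw [Q.t_eq, hfbarγ, hsβ]
    -- every vertex is i or j
    have key : ∀ k : V, k = i ∨ k = j := by
      intro k
      have hc := Q.connected i k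
      induction hc with
      | refl => exact Or.inl rfl
      | tail _ hedge ih =>
        rename_i p q _
        obtain ⟨e, he⟩ := hedge
        have hs : ∀ e : A, Q.s e = i ∨ Q.s e = j → Q.t e = i ∨ Q.t e = j := by
          intro e he'
          rcases he' with h | h
          · rcases Q.bar_complete α e (h.trans hi.symm ▸ h) with rfl | rfl
            · exact Or.inl htα
            · exact Or.inr htβ
          · rcases Q.bar_complete γ e h with rfl | rfl
            · exact Or.inr htγ
            · exact Or.inl htbarγ
        have ht : ∀ e : A, Q.t e = i ∨ Q.t e = j → Q.s e = i ∨ Q.s e = j := by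
          intro e he'
          rcases he' with h | h
          · have : Q.s (Q.f e) = Q.s α := by rw [← Q.t_eq, h]
            rcases Q.bar_complete α (Q.f e) this with h' | h'
            · have : e = α := Q.f.injective (by rw [h', hfα])
              subst this; exact Or.inl rfl
            · have : e = Q.bar γ := Q.f.injective (by rw [h', hfbarγ])
              subst this; exact Or.inr hsbarγ
          · have : Q.s (Q.f e) = Q.s γ := by rw [← Q.t_eq, h]
            rcases Q.bar_complete γ (Q.f e) this with h' | h'
            · have : e = β := Q.f.injective (by rw [h', hγ])
              subst this; exact Or.inl hsβ
            · have : e = γ := Q.f.injective (by rw [h', hfγ])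
              subst this; exact Or.inr rfl
        rcases he with ⟨hse, hte⟩ | ⟨hse, hte⟩
        · exact hte ▸ hs e (hse ▸ ih)
        · exact hse ▸ ht e (hte ▸ ih)
    -- contradiction with card ≥ 3
    have hsub : (Finset.univ : Finset V) ⊆ {i, j} := by
      intro k _
      rcases key k with rfl | rfl <;> simp
    have := Finset.card_le_card hsub
    have hle : ({i, j} : Finset V).card ≤ 2 := Finset.card_insert_le _ _ |>.trans (by simp)
    rw [Finset.card_univ] at this
    omega
  · -- case f α = bar α : then g α = α, contradicting minimal period 3
    have : Q.g α = α := by simp [TQ.g, hfα, Q.bar_invol]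
    have h1 : Function.minimalPeriod Q.g α = 1 :=
      Function.minimalPeriod_eq_one_iff_isFixedPt.2 this
    rw [show Function.minimalPeriod Q.g α = Q.n α from rfl, hn] at h1
    omega
end

section
/- Let (Q, f) be a triangulation quiver with at least three vertices, with weight function m satisfying the Assumption. Then there is no arrow α with n_ᾱ = 3, n_{f(ᾱ)} = 3 and n_α = 2 (note that n_α = n_{f²(ᾱ)} for every arrow α). -/
variable {V A : Type} [Fintype V] [DecidableEq V] [Fintype A] [DecidableEq A]

variable {Q : TQ V A} {W : Weights Q} {K : Type} [Field K] {Λ : Type} [Ring Λ] [Algebra K Λ]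

/-- there is no arrow `α` with `n ᾱ = 3`, `n (f ᾱ) = 3` and `n α = 2`. -/
theorem stmt4 (Q : TQ V A) (W : Weights Q) (h3 : 3 ≤ Fintype.card V)
    (hA : W.Assumption) :
    ¬ ∃ α : A, Q.n (Q.bar α) = 3 ∧ Q.n (Q.f (Q.bar α)) = 3 ∧ Q.n α = 2 := by

  rintro ⟨α, hb3, hfb3, ha2⟩
  set B := Q.bar with hB
  set F := fun a => Q.f a with hF
  have fcube : ∀ a, F (F (F a)) = a := Q.f_cube
  have binv : ∀ a, B (B a) = a := Q.bar_invol
  -- g iterated facts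
  have hit2 : Q.g (Q.g α) = α := by
    have h := Function.iterate_minimalPeriod (f := Q.g) (x := α)
    rw [show Function.minimalPeriod Q.g α = 2 from ha2] at h
    simpa [Function.iterate_succ_apply'] using h
  have hit3 : Q.g (Q.g (Q.g (B α))) = B α := by
    have h := Function.iterate_minimalPeriod (f := Q.g) (x := B α)
    rw [show Function.minimalPeriod Q.g (B α) = 3 from hb3] at h
    simpa [Function.iterate_succ_apply'] using h
  have hit3' : Q.g (Q.g (Q.g (F (B α)))) = F (B α) := by
    have h := Function.iterate_minimalPeriod (f := Q.g) (x := F (B α))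
    rw [show Function.minimalPeriod Q.g (F (B α)) = 3 from hfb3] at h
    simpa [Function.iterate_succ_apply'] using h
  have hne : Q.g α ≠ α := by
    intro h
    have h1 : Function.minimalPeriod Q.g α = 1 :=
      Function.minimalPeriod_eq_one_iff_isFixedPt.mpr h
    have h2 : Function.minimalPeriod Q.g α = 2 := ha2
    rw [h1] at h2; exact (by norm_num : (1:ℕ) ≠ 2) h2
  have hg : ∀ a, Q.g a = B (F a) := fun a => rfl
  set b := B α with hb
  -- E1 : B (F α) = F (F b)
  have E1 : B (F α) = F (F b) := by
    have h2 : B (F (B (F α))) = α := by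
      have := hit2; rw [hg, hg] at this; exact this
    have h2' : F (B (F α)) = b := by
      have := congrArg B h2; rwa [binv] at this
    calc B (F α) = F (F (F (B (F α)))) := (fcube _).symm
      _ = F (F b) := by rw [h2']
  -- E2' : F (B (F b)) = B (F (F α))
  have E2' : F (B (F b)) = B (F (F α)) := by
    have h3 : B (F (B (F (B (F b))))) = b := by
      have := hit3; rw [hg, hg, hg] at this; exact this
    have h3' : F (B (F (B (F b)))) = B b := by
      have := congrArg B h3; rwa [binv] at this
    have h3'' : B (F (B (F b))) = F (F (B b)) := by
      calc B (F (B (F b))) = F (F (F (B (F (B (F b)))))) := (fcube _).symm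
        _ = F (F (B b)) := by rw [h3']
    have := congrArg B h3''
    rw [binv] at this
    rw [this, hb, binv]
  -- E3 : F (B (F (F α))) = B (F b)
  have E3 : F (B (F (F α))) = B (F b) := by
    have key1 : Q.g (F b) = F α := by
      rw [hg, ← E1, binv]
    have key2 : Q.g (Q.g (F b)) = B (F (F α)) := by
      rw [key1, hg]
    have h3' : B (F (B (F (F α)))) = F b := by
      have := hit3'
      rw [key1] at this
      rw [hg, hg] at this
      exact this
    have := congrArg B h3'
    rwa [binv] at this
  -- From E2' and E3 : 2-cycle of F forces equality
  have hyz : B (F b) = B (F (F α)) := by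
    have h1 : F (B (F b)) = B (F (F α)) := E2'
    have h2 : F (B (F (F α))) = B (F b) := E3
    calc B (F b) = F (F (F (B (F b)))) := (fcube _).symm
      _ = F (F (B (F (F α)))) := by rw [h1]
      _ = F (B (F b)) := by rw [h2]
      _ = B (F (F α)) := h1
  have hfb : F b = F (F α) := by
    have := congrArg B hyz; rwa [binv, binv] at this
  have hba : b = F α := by
    calc b = F (F (F b)) := (fcube _).symm
      _ = F (F (F (F α))) := by rw [hfb]
      _ = F α := by rw [fcube]
  exact hne (by rw [hg, ← hba, hb, binv])
end

section
/- Let (Q, f) be a triangulation quiver with at least three vertices, with weight function m satisfying the Assumption. Then there is no arrow α with n_{f(ᾱ)} = 2 and n_ᾱ = n_{f(α)} = 3. -/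
variable {V A : Type} [Fintype V] [DecidableEq V] [Fintype A] [DecidableEq A]

variable {Q : TQ V A} {W : Weights Q} {K : Type} [Field K] {Λ : Type} [Ring Λ] [Algebra K Λ]

/-- there is no arrow `α` with `n (f ᾱ) = 2` and `n ᾱ = n (f α) = 3`. -/
theorem stmt5 (Q : TQ V A) (W : Weights Q) (h3 : 3 ≤ Fintype.card V)
    (hA : W.Assumption) :
    ¬ ∃ α : A, Q.n (Q.f (Q.bar α)) = 2 ∧ Q.n (Q.bar α) = 3 ∧ Q.n (Q.f α) = 3 := by
  rintro ⟨α, h2, hb3, hf3⟩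
  have hgdef : ∀ a : A, Q.g a = Q.bar (Q.f a) := fun _ => rfl
  have hbarg : ∀ a : A, Q.bar (Q.g a) = Q.f a := fun a => Q.bar_invol (Q.f a)
  have hginj : Function.Injective Q.g := fun a b hab => by
    have h := congrArg Q.bar hab
    rw [hbarg, hbarg] at h
    exact Q.f.injective h
  have hbar2 : ∀ a : A, Q.bar a = Q.g (Q.f (Q.f a)) := fun a => by
    rw [hgdef, Q.f_cube]
  have iter3 : ∀ a : A, Q.n a = 3 → Q.g (Q.g (Q.g a)) = a := fun a ha => by
    have h := Function.iterate_minimalPeriod (f := Q.g) (x := a)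
    rw [show Function.minimalPeriod Q.g a = 3 from ha] at h
    simpa [Function.iterate_succ_apply'] using h
  have hdd2 : Q.g (Q.g (Q.f (Q.bar α))) = Q.f (Q.bar α) := by
    have h := Function.iterate_minimalPeriod (f := Q.g) (x := Q.f (Q.bar α))
    rw [show Function.minimalPeriod Q.g (Q.f (Q.bar α)) = 2 from h2] at h
    simpa [Function.iterate_succ_apply'] using h
  have hdne : Q.g (Q.f (Q.bar α)) ≠ Q.f (Q.bar α) := fun h => by
    have hp : Function.IsPeriodicPt Q.g 1 (Q.f (Q.bar α)) := by
      simpa [Function.IsPeriodicPt, Function.IsFixedPt] using h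
    have hle := hp.minimalPeriod_le one_pos
    rw [show Function.minimalPeriod Q.g (Q.f (Q.bar α)) = 2 from h2] at hle
    omega
  have hb33 : Q.g (Q.g (Q.g (Q.bar α))) = Q.bar α := iter3 _ hb3
  have hfa3 : Q.g (Q.g (Q.g (Q.f α))) = Q.f α := iter3 _ hf3
  have h4 : Q.f (Q.g (Q.f (Q.bar α))) = Q.bar (Q.f (Q.bar α)) := by
    rw [← hbarg (Q.g (Q.f (Q.bar α))), hdd2]
  have e1 : Q.g (Q.f (Q.f α)) = Q.bar α := by rw [hgdef, Q.f_cube]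
  have h5 : Q.f (Q.f α) = Q.g (Q.g (Q.bar α)) := hginj (e1.trans hb33.symm)
  have h6 : Q.f (Q.g (Q.bar α)) = Q.g (Q.f α) := by
    have h := hbarg (Q.g (Q.bar α))
    rw [← h5] at h
    rw [← h, hbar2 (Q.f (Q.f α)), Q.f_cube (Q.f α)]
  have h7 : Q.f (Q.f (Q.g (Q.bar α))) = Q.g (Q.f (Q.bar α)) := by
    rw [hgdef (Q.bar α), ← h4, Q.f_cube]
  have h8 : Q.g (Q.g (Q.f α)) = Q.f (Q.f (Q.bar α)) := by
    rw [hgdef (Q.g (Q.f α)), ← h6, h7, hbarg]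
  rw [h8] at hfa3
  have h10 : Q.f α = α := by
    rw [hgdef, Q.f_cube, Q.bar_invol] at hfa3
    exact hfa3.symm
  have h11 : Q.g α = Q.bar α := by rw [hbar2 α, h10, h10]
  rw [h10, h11] at h6
  rw [h6] at h7
  exact hdne h7.symm
end

section
/- Let (Q, f) be a triangulation quiver with at least three vertices, with weight function m satisfying the Assumption. If α is an arrow such that ᾱ is not a loop, n_ᾱ = 2 and n_α = 3, then the g-cycle of f(α) has length at least 5, i.e. n_{f(α)} ≥ 5. -/
variable {V A : Type} [Fintype V] [DecidableEq V] [Fintype A] [DecidableEq A]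

variable {Q : TQ V A} {W : Weights Q} {K : Type} [Field K] {Λ : Type} [Ring Λ] [Algebra K Λ]

/-- if `ᾱ` is not a loop, `n ᾱ = 2` and `n α = 3`, then `n (f α) ≥ 5`. -/
theorem stmt6 (Q : TQ V A) (W : Weights Q) (h3 : 3 ≤ Fintype.card V)
    (hA : W.Assumption) (α : A)
    (hl : ¬ Q.IsLoop (Q.bar α)) (h2 : Q.n (Q.bar α) = 2) (hn : Q.n α = 3) :
    5 ≤ Q.n (Q.f α) := by
  classical
  -- `g` is injective, hence bijective on the finite type `A`
  have hbar : Function.Involutive Q.bar := Q.bar_invol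
  have hginj : Function.Injective Q.g := by
    intro a b h
    exact Q.f.injective (hbar.injective h)
  have hgbij : Function.Bijective Q.g := Finite.injective_iff_bijective.mp hginj
  -- `f α` is a periodic point of `g`, so its minimal period is positive
  have hper : 0 < Q.n (Q.f α) := by
    set e : Equiv.Perm A := Equiv.ofBijective Q.g hgbij with he
    have hco : ⇑e = Q.g := rfl
    have hord : 0 < orderOf e := orderOf_pos e
    refine Function.IsPeriodicPt.minimalPeriod_pos hord ?_
    show Function.IsPeriodicPt Q.g (orderOf e) (Q.f α)
    have h1 : Q.g^[orderOf e] (Q.f α) = (e ^ orderOf e) (Q.f α) := by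
      rw [← hco, Equiv.Perm.iterate_eq_pow]
    show Q.g^[orderOf e] (Q.f α) = Q.f α
    rw [h1, pow_orderOf_eq_one]
    rfl
  -- consequences of `n (bar α) = 2`
  have h2' : Function.minimalPeriod Q.g (Q.bar α) = 2 := h2
  have hg2b : Q.g (Q.g (Q.bar α)) = Q.bar α := by
    have h := Function.iterate_minimalPeriod (f := Q.g) (x := Q.bar α)
    rw [h2'] at h
    exact h
  have hfg2b : Q.f (Q.g (Q.bar α)) = α := by
    have h' : Q.bar (Q.f (Q.g (Q.bar α))) = Q.bar α := hg2b
    have h'' := congrArg Q.bar h'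
    rwa [Q.bar_invol, Q.bar_invol] at h''
  have hgβ : Q.g (Q.bar α) = Q.f (Q.f α) := by
    have h := congrArg (fun y => Q.f (Q.f y)) hfg2b
    rw [Q.f_cube] at h
    exact h
  have key1 : Q.f (Q.bar α) = Q.bar (Q.f (Q.f α)) := by
    have h : Q.bar (Q.f (Q.bar α)) = Q.f (Q.f α) := hgβ
    have h' := congrArg Q.bar h
    rwa [Q.bar_invol] at h'
  -- consequences of `n α = 3`
  have hn' : Function.minimalPeriod Q.g α = 3 := hn
  have hg3a : Q.g (Q.g (Q.g α)) = α := by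
    have h := Function.iterate_minimalPeriod (f := Q.g) (x := α)
    rw [hn'] at h
    exact h
  have hfg2a : Q.f (Q.g (Q.g α)) = Q.bar α := by
    have h' : Q.bar (Q.f (Q.g (Q.g α))) = α := hg3a
    have h'' := congrArg Q.bar h'
    rwa [Q.bar_invol] at h''
  have key2 : Q.g (Q.g α) = Q.f (Q.f (Q.bar α)) := by
    have h := congrArg (fun y => Q.f (Q.f y)) hfg2a
    rw [Q.f_cube] at h
    exact h
  have keyA : Q.f (Q.g α) = Q.bar (Q.g (Q.g α)) := by
    have h : Q.g (Q.g α) = Q.bar (Q.f (Q.g α)) := rfl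
    rw [h, Q.bar_invol]
  have hgαne : Q.g α ≠ α := by
    intro h
    have h1 : Function.minimalPeriod Q.g α = 1 :=
      Function.minimalPeriod_eq_one_iff_isFixedPt.mpr h
    rw [hn'] at h1
    exact (by norm_num : (3 : ℕ) ≠ 1) h1
  -- the three iterates of `g` at `f α`
  have E1 : Q.g (Q.f α) = Q.f (Q.bar α) := key1.symm
  have E2 : Q.g (Q.g (Q.f α)) = Q.f (Q.g α) := by
    rw [E1]
    show Q.bar (Q.f (Q.f (Q.bar α))) = Q.f (Q.g α)
    rw [← key2]
    exact keyA.symm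
  have E3 : Q.g (Q.g (Q.g (Q.f α))) = Q.bar (Q.f (Q.f (Q.g α))) := by
    rw [E2]
    rfl
  -- main case analysis
  by_contra hcon
  push_neg at hcon
  have hv : Q.n (Q.f α) = 1 ∨ Q.n (Q.f α) = 2 ∨ Q.n (Q.f α) = 3 ∨ Q.n (Q.f α) = 4 := by
    omega
  have hkiter := Function.iterate_minimalPeriod (f := Q.g) (x := Q.f α)
  rcases hv with hv | hv | hv | hv
  · -- period 1 : forces `bar α = α`
    have hv' : Function.minimalPeriod Q.g (Q.f α) = 1 := hv
    rw [hv'] at hkiter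
    have hk1 : Q.g (Q.f α) = Q.f α := hkiter
    rw [E1] at hk1
    exact Q.bar_ne α (Q.f.injective hk1)
  · -- period 2 : forces `g α = α`
    have hv' : Function.minimalPeriod Q.g (Q.f α) = 2 := hv
    rw [hv'] at hkiter
    have hk2 : Q.g (Q.g (Q.f α)) = Q.f α := hkiter
    rw [E2] at hk2
    exact hgαne (Q.f.injective hk2)
  · -- period 3 : forces `bar α` to be a loop
    have hv' : Function.minimalPeriod Q.g (Q.f α) = 3 := hv
    rw [hv'] at hkiter
    have hk3 : Q.g (Q.g (Q.g (Q.f α))) = Q.f α := hkiter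
    rw [E3] at hk3
    -- `f (f (g α)) = g α`
    have hc : Q.f (Q.f (Q.g α)) = Q.g α := by
      have h := congrArg Q.bar hk3
      rw [Q.bar_invol] at h
      exact h
    have hfix : Q.f (Q.g α) = Q.g α := by
      have h := congrArg Q.f hc
      rw [Q.f_cube] at h
      exact h.symm
    -- hence `g (g α) = f α`
    have hgg : Q.g (Q.g α) = Q.f α := by
      have h : Q.bar (Q.g (Q.g α)) = Q.g α := by rw [← keyA]; exact hfix
      have h' := congrArg Q.bar h
      rw [Q.bar_invol] at h'
      have : Q.bar (Q.g α) = Q.f α := by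
        show Q.bar (Q.bar (Q.f α)) = Q.f α
        exact Q.bar_invol _
      rw [h', this]
    -- so `f (f α) = bar α`, hence `bar α` is a loop
    have hffa : Q.f (Q.f α) = Q.bar α := by rw [← hgg]; exact hfg2a
    have hfba : Q.f (Q.bar α) = α := by
      rw [← hffa, Q.f_cube]
    apply hl
    show Q.s (Q.bar α) = Q.t (Q.bar α)
    rw [Q.t_eq, hfba, Q.s_bar]
  · -- period 4 : forces `bar` to have a fixed point
    have hv' : Function.minimalPeriod Q.g (Q.f α) = 4 := hv
    rw [hv'] at hkiter
    have hk4 : Q.g (Q.g (Q.g (Q.g (Q.f α)))) = Q.f α := hkiter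
    rw [E3] at hk4
    -- hk4 : Q.g (Q.bar (Q.f (Q.f (Q.g α)))) = Q.f α
    have h1 : Q.bar (Q.f (Q.bar (Q.f (Q.f (Q.g α))))) = Q.f α := hk4
    have h2'' : Q.f (Q.bar (Q.f (Q.f (Q.g α)))) = Q.bar (Q.f α) := by
      have h := congrArg Q.bar h1
      rwa [Q.bar_invol] at h
    -- `bar (f α) = g α` by definition
    have h3' : Q.f (Q.bar (Q.f (Q.f (Q.g α)))) = Q.g α := h2''
    have h4 := congrArg (fun y => Q.f (Q.f y)) h3'
    rw [Q.f_cube] at h4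
    exact Q.bar_ne (Q.f (Q.f (Q.g α))) h4
end

section
/- For an arrow α set ζ_α = x_α x_{f(α)} x_{g(f(α))} and ξ_α = x_α x_{g(α)} x_{f(g(α))} in Λ. Then: (i) if α is a loop, then ζ_α = 0 and ξ_α = 0; (ii) if f(α) is a loop, then ζ_α = 0; (iii) if g(α) is a loop, then ξ_α = 0. -/
variable {V A : Type} [Fintype V] [DecidableEq V] [Fintype A] [DecidableEq A]

variable {Q : TQ V A} {W : Weights Q} {K : Type} [Field K] {Λ : Type} [Ring Λ] [Algebra K Λ]

/-! ### Auxiliary lemmas for `stmt7` -/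

lemma stmt7_bar_inj {a b : A} (h : Q.bar a = Q.bar b) : a = b := by
  have h2 := congrArg Q.bar h
  rwa [Q.bar_invol, Q.bar_invol] at h2

lemma stmt7_g_inj {a b : A} (h : Q.g a = Q.g b) : a = b :=
  Q.f.injective (stmt7_bar_inj h)

lemma stmt7_g_def (a : A) : Q.g a = Q.bar (Q.f a) := rfl

lemma stmt7_g_periodic (a : A) : a ∈ Function.periodicPts Q.g := by
  have hbij : Function.Bijective Q.g :=
    Finite.injective_iff_bijective.mp fun a b h => stmt7_g_inj h
  let σ : Equiv.Perm A := Equiv.ofBijective Q.g hbij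
  have hc : Q.g = ⇑σ := rfl
  refine ⟨orderOf σ, orderOf_pos σ, ?_⟩
  show Q.g^[orderOf σ] a = a
  rw [hc, Equiv.Perm.iterate_eq_pow, pow_orderOf_eq_one]
  rfl

lemma stmt7_n_g (a : A) : Q.n (Q.g a) = Q.n a :=
  Function.minimalPeriod_apply (stmt7_g_periodic a)

lemma stmt7_g_iter_n (a : A) : Q.g^[Q.n a] a = a :=
  Function.iterate_minimalPeriod

lemma stmt7_virt_cases {a : A} (h : W.Virtual a) :
    Q.g a = a ∨ Q.g (Q.g a) = a := by
  have h' : W.m a * Q.n a = 2 := h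
  have h1 := stmt7_g_iter_n (Q := Q) a
  have hn : Q.n a = 1 ∨ Q.n a = 2 := by
    have hd : Q.n a ∣ 2 := Dvd.intro_left _ h'
    have hle : Q.n a ≤ 2 := Nat.le_of_dvd two_pos hd
    have hne : Q.n a ≠ 0 := by rintro h0; rw [h0, mul_zero] at h'; exact absurd h' (by norm_num)
    omega
  rcases hn with hn | hn
  · left; rw [hn] at h1; exact h1
  · right; rw [hn] at h1; exact h1

lemma stmt7_isolated {a : A} (hf : Q.f a = a) (hfb : Q.f (Q.bar a) = Q.bar a) : False := by
  have key : ∀ e : A, Q.s e = Q.s a ∨ Q.t e = Q.s a → Q.s e = Q.s a ∧ Q.t e = Q.s a := by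
    intro e he
    have hmem : e = a ∨ e = Q.bar a := by
      rcases he with he | he
      · exact Q.bar_complete a e he
      · have hse : Q.s (Q.f e) = Q.s a := by rw [← Q.t_eq]; exact he
        rcases Q.bar_complete a (Q.f e) hse with h | h
        · exact Or.inl (Q.f.injective (by rw [h, hf]))
        · exact Or.inr (Q.f.injective (by rw [h, hfb]))
    rcases hmem with rfl | rfl
    · exact ⟨rfl, by rw [Q.t_eq, hf]⟩
    · exact ⟨Q.s_bar a, by rw [Q.t_eq, hfb, Q.s_bar]⟩
  have hall : ∀ p, Relation.ReflTransGen
      (fun p q => ∃ e, (Q.s e = p ∧ Q.t e = q) ∨ (Q.s e = q ∧ Q.t e = p)) (Q.s a) p →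
      p = Q.s a := by
    intro p hp
    induction hp with
    | refl => rfl
    | tail _ h ih =>
      obtain ⟨e, he⟩ := h
      rcases he with ⟨h1, h2⟩ | ⟨h1, h2⟩
      · rw [← h2]; exact (key e (Or.inl (h1.trans ih))).2
      · rw [← h1]; exact (key e (Or.inr (h2.trans ih))).1
  obtain ⟨j, hj⟩ := Fintype.exists_ne_of_one_lt_card
    (by have := Q.two_vertices; omega) (Q.s a)
  exact hj (hall j (Q.connected (Q.s a) j))

lemma stmt7_zeta_zero (hA : W.Assumption) (D : AlgData Q W K Λ) (hR : D.Rels) (α : A)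
    (hl : Q.IsLoop α ∨ Q.IsLoop (Q.f α)) :
    D.x α * D.x (Q.f α) * D.x (Q.g (Q.f α)) = 0 := by
  have gf2 : Q.g (Q.f (Q.f α)) = Q.bar α := by rw [stmt7_g_def, Q.f_cube]
  by_cases hfa : Q.f α = α
  · -- case `f α = α` (so `α` is a loop)
    have hnE1 : ¬ W.Virtual (Q.f (Q.f α)) := by
      intro hv
      rcases stmt7_virt_cases hv with h | h
      · rw [gf2, hfa, hfa] at h
        exact Q.bar_ne α h
      · rw [gf2, hfa, hfa] at h
        -- h : Q.g (Q.bar α) = α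
        rw [stmt7_g_def (Q.bar α)] at h
        have hfb : Q.f (Q.bar α) = Q.bar α := by
          have h2 := congrArg Q.bar h
          rwa [Q.bar_invol] at h2
        exact stmt7_isolated hfa hfb
    have hnE2 : ¬ (W.Virtual (Q.f (Q.bar α)) ∧ W.m (Q.bar α) = 1 ∧ Q.n (Q.bar α) = 3) := by
      rintro ⟨hv, hm, hn⟩
      have h3 : Q.g (Q.g (Q.g (Q.bar α))) = Q.bar α := by
        have h1 := stmt7_g_iter_n (Q := Q) (Q.bar α)
        rw [hn] at h1
        exact h1
      rw [stmt7_g_def (Q.g (Q.g (Q.bar α)))] at h3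
      have h4 : Q.f (Q.g (Q.g (Q.bar α))) = α := by
        have h2 := congrArg Q.bar h3
        rwa [Q.bar_invol, Q.bar_invol] at h2
      have h5 : Q.g (Q.g (Q.bar α)) = α := Q.f.injective (by rw [h4, hfa])
      rw [stmt7_g_def (Q.g (Q.bar α))] at h5
      have h6 : Q.f (Q.g (Q.bar α)) = Q.bar α := by
        have h7 := congrArg Q.bar h5
        rwa [Q.bar_invol] at h7
      have h8 : Q.f (Q.f (Q.bar α)) = Q.g (Q.bar α) := by
        conv_rhs => rw [← Q.f_cube (Q.g (Q.bar α))]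
        rw [h6]
      have h9 : Q.bar (Q.g (Q.bar α)) = Q.f (Q.bar α) := by
        rw [stmt7_g_def (Q.bar α), Q.bar_invol]
      have hloop : Q.IsLoop (Q.bar (Q.g (Q.bar α))) := by
        show Q.s _ = Q.t _
        rw [Q.t_eq, Q.s_bar, h9, h8]
      have hvb : W.Virtual (Q.bar (Q.g (Q.bar α))) := by rw [h9]; exact hv
      have h10 := hA.2.2 (Q.g (Q.bar α)) hvb hloop
      rw [W.m_g, stmt7_n_g, hm, hn] at h10
      omega
    exact hR.2.1 α hnE1 hnE2
  · -- case `f α ≠ α`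
    have hkey : Q.f α = Q.bar α ∨ Q.f (Q.f α) = Q.bar (Q.f α) := by
      rcases hl with hl | hl
      · left
        have hl' : Q.s α = Q.t α := hl
        have hs : Q.s (Q.f α) = Q.s α := by rw [Q.t_eq] at hl'; exact hl'.symm
        rcases Q.bar_complete α (Q.f α) hs with h | h
        · exact absurd h hfa
        · exact h
      · right
        have hl' : Q.s (Q.f α) = Q.t (Q.f α) := hl
        have hs : Q.s (Q.f (Q.f α)) = Q.s (Q.f α) := by rw [Q.t_eq] at hl'; exact hl'.symm
        rcases Q.bar_complete (Q.f α) (Q.f (Q.f α)) hs with h | h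
        · exact absurd (Q.f.injective h) hfa
        · exact h
    have hnE1 : ¬ W.Virtual (Q.f (Q.f α)) := by
      intro hv
      rcases stmt7_virt_cases hv with h | h
      · rw [gf2] at h
        rcases hkey with hk | hk
        · rw [← hk] at h
          exact hfa (Q.f.injective h).symm
        · exact hfa (stmt7_bar_inj (h.trans hk)).symm
      · rw [gf2, stmt7_g_def (Q.bar α)] at h
        rcases hkey with hk | hk
        · rw [← hk] at h
          exact Q.bar_ne _ h
        · rw [hk] at h
          exact Q.bar_ne α (Q.f.injective (stmt7_bar_inj h))
    have hnE2 : ¬ (W.Virtual (Q.f (Q.bar α)) ∧ W.m (Q.bar α) = 1 ∧ Q.n (Q.bar α) = 3) := by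
      rintro ⟨hv, hm, hn⟩
      rcases hkey with hk | hk
      · rw [← hk] at hv
        exact hnE1 hv
      · -- `f (f α) = bar (f α)`
        have h3 : Q.g (Q.g (Q.g (Q.bar α))) = Q.bar α := by
          have h1 := stmt7_g_iter_n (Q := Q) (Q.bar α)
          rw [hn] at h1
          exact h1
        rw [stmt7_g_def (Q.g (Q.g (Q.bar α)))] at h3
        have h4 : Q.f (Q.g (Q.g (Q.bar α))) = α := by
          have h2 := congrArg Q.bar h3
          rwa [Q.bar_invol, Q.bar_invol] at h2
        have h5 : Q.g (Q.g (Q.bar α)) = Q.f (Q.f α) := by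
          conv_lhs => rw [← Q.f_cube (Q.g (Q.g (Q.bar α)))]
          rw [h4]
        have h6 : Q.g (Q.g (Q.bar α)) = Q.g α := by rw [h5, hk, stmt7_g_def]
        have h7 : Q.g (Q.bar α) = α := stmt7_g_inj h6
        rw [stmt7_g_def (Q.bar α)] at h7
        have h8 : Q.f (Q.bar α) = Q.bar α := by
          have h9 := congrArg Q.bar h7
          rwa [Q.bar_invol] at h9
        rw [h8] at hv
        have hv' : W.m (Q.bar α) * Q.n (Q.bar α) = 2 := hv
        rw [hm, hn] at hv'
        norm_num at hv'
    exact hR.2.1 α hnE1 hnE2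

lemma stmt7_xi_zero (hA : W.Assumption) (D : AlgData Q W K Λ) (hR : D.Rels) (α : A)
    (hl : Q.IsLoop α ∨ Q.IsLoop (Q.g α)) :
    D.x α * D.x (Q.g α) * D.x (Q.f (Q.g α)) = 0 := by
  have gf2 : Q.g (Q.f (Q.f α)) = Q.bar α := by rw [stmt7_g_def, Q.f_cube]
  have H : Q.f α = α ∨ Q.f α = Q.bar α ∨ Q.f (Q.g α) = Q.g α := by
    rcases hl with hl | hl
    · have hl' : Q.s α = Q.t α := hl
      have hs : Q.s (Q.f α) = Q.s α := by rw [Q.t_eq] at hl'; exact hl'.symm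
      rcases Q.bar_complete α (Q.f α) hs with h | h
      · exact Or.inl h
      · exact Or.inr (Or.inl h)
    · have hl' : Q.s (Q.g α) = Q.t (Q.g α) := hl
      have hs : Q.s (Q.f (Q.g α)) = Q.s (Q.g α) := by rw [Q.t_eq] at hl'; exact hl'.symm
      rcases Q.bar_complete (Q.g α) (Q.f (Q.g α)) hs with h | h
      · exact Or.inr (Or.inr h)
      · right; left
        rw [stmt7_g_def, Q.bar_invol] at h
        have h2 : Q.bar (Q.f α) = α := Q.f.injective h
        have h3 := congrArg Q.bar h2
        rwa [Q.bar_invol] at h3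
  have hnF1 : ¬ W.Virtual (Q.f α) := by
    intro hv
    rcases stmt7_virt_cases hv with h | h
    · rw [stmt7_g_def] at h
      have h1 : Q.f (Q.f α) = Q.bar (Q.f α) := by
        have h2 := congrArg Q.bar h
        rwa [Q.bar_invol] at h2
      rcases H with hk | hk | hk
      · rw [hk, hk] at h1
        exact Q.bar_ne α h1.symm
      · have h2 : Q.f (Q.f α) = α := by
          rw [hk]
          rw [hk, Q.bar_invol] at h1
          exact h1
        have h3 : α = Q.f α := by
          have h4 := congrArg Q.f h2
          rwa [Q.f_cube] at h4
        exact Q.bar_ne α (h3.trans hk).symm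
      · have h2 : Q.f (Q.f α) = Q.g α := by rw [h1, stmt7_g_def]
        have h3 : α = Q.f (Q.g α) := by
          have h4 := congrArg Q.f h2
          rwa [Q.f_cube] at h4
        rw [hk] at h3
        have h4 : Q.f (Q.f α) = α := h2.trans h3.symm
        have h5 : α = Q.f α := by
          have h6 := congrArg Q.f h4
          rwa [Q.f_cube] at h6
        rw [stmt7_g_def, ← h5] at h3
        exact Q.bar_ne α h3.symm
    · rw [stmt7_g_def (Q.f α), stmt7_g_def (Q.bar (Q.f (Q.f α)))] at h
      have hstar : Q.f (Q.bar (Q.f (Q.f α))) = Q.bar (Q.f α) := by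
        have h2 := congrArg Q.bar h
        rwa [Q.bar_invol] at h2
      rcases H with hk | hk | hk
      · rw [hk, hk] at hstar
        exact stmt7_isolated hk hstar
      · have hga : Q.bar (Q.f α) = α := by rw [hk, Q.bar_invol]
        rw [hga] at hstar
        have h2 : Q.bar (Q.f (Q.f α)) = Q.f (Q.f α) :=
          Q.f.injective (hstar.trans (Q.f_cube α).symm)
        exact Q.bar_ne _ h2
      · have h1 : Q.f (Q.bar (Q.f (Q.f α))) = Q.f (Q.g α) := by
          rw [hstar, hk, stmt7_g_def]
        have h2 : Q.bar (Q.f (Q.f α)) = Q.g α := Q.f.injective h1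
        rw [stmt7_g_def] at h2
        have h3 : Q.f α = α := Q.f.injective (stmt7_bar_inj h2)
        have h4 : Q.f (Q.bar α) = Q.bar α := by
          have h5 := hk
          rw [stmt7_g_def, h3] at h5
          exact h5
        exact stmt7_isolated h3 h4
  have hnF2 : ¬ (W.Virtual (Q.f (Q.f α)) ∧ W.m (Q.f α) = 1 ∧ Q.n (Q.f α) = 3) := by
    rintro ⟨hv, hm, hn⟩
    rcases stmt7_virt_cases hv with h | h
    · rw [gf2] at h
      -- h : Q.bar α = Q.f (Q.f α)
      rcases H with hk | hk | hk
      · rw [hk, hk] at h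
        exact Q.bar_ne α h
      · have h1 : Q.f (Q.bar α) = α := by rw [h]; exact Q.f_cube α
        have h2 : Q.bar α = Q.f (Q.bar α) := h.trans (congrArg Q.f hk)
        exact Q.bar_ne α (h2.trans h1)
      · have hfb : Q.f (Q.bar α) = α := by rw [h]; exact Q.f_cube α
        have hloop : Q.IsLoop (Q.bar α) := by
          show Q.s (Q.bar α) = Q.t (Q.bar α)
          rw [Q.t_eq, hfb, Q.s_bar]
        have hvb : W.Virtual (Q.bar α) := by rw [h]; exact hv
        have h10 := hA.2.2 α hvb hloop
        have hga : Q.g (Q.f α) = α := by rw [stmt7_g_def, ← h, Q.bar_invol]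
        have e1 := W.m_g (Q.f α)
        rw [hga] at e1
        have e2 := stmt7_n_g (Q := Q) (Q.f α)
        rw [hga] at e2
        rw [e1, e2, hm, hn] at h10
        omega
    · rw [gf2, stmt7_g_def (Q.bar α)] at h
      -- h : Q.bar (Q.f (Q.bar α)) = Q.f (Q.f α)
      have hdiam : Q.f (Q.bar α) = Q.bar (Q.f (Q.f α)) := by
        have h2 := congrArg Q.bar h
        rwa [Q.bar_invol] at h2
      rcases H with hk | hk | hk
      · rw [hk, hk] at hdiam
        exact stmt7_isolated hk hdiam
      · rw [← hk] at hdiam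
        exact Q.bar_ne _ hdiam.symm
      · by_cases hbf : Q.bar α = Q.f (Q.f α)
        · have hfb : Q.f (Q.bar α) = α := by rw [hbf]; exact Q.f_cube α
          have hloop : Q.IsLoop (Q.bar α) := by
            show Q.s (Q.bar α) = Q.t (Q.bar α)
            rw [Q.t_eq, hfb, Q.s_bar]
          have hvb : W.Virtual (Q.bar α) := by rw [hbf]; exact hv
          have h10 := hA.2.2 α hvb hloop
          have hga : Q.g (Q.f α) = α := by rw [stmt7_g_def, ← hbf, Q.bar_invol]
          have e1 := W.m_g (Q.f α)
          rw [hga] at e1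
          have e2 := stmt7_n_g (Q := Q) (Q.f α)
          rw [hga] at e2
          rw [e1, e2, hm, hn] at h10
          omega
        · have hgg : Q.g (Q.g α) = Q.f α := by
            rw [stmt7_g_def (Q.g α), hk, stmt7_g_def α, Q.bar_invol]
          have hnα : Q.n α = 3 := by
            rw [← stmt7_n_g (Q := Q) α, ← stmt7_n_g (Q := Q) (Q.g α), hgg]
            exact hn
          have h3 : Q.g (Q.g (Q.g α)) = α := by
            have h1 := stmt7_g_iter_n (Q := Q) α
            rw [hnα] at h1
            exact h1
          rw [hgg, stmt7_g_def (Q.f α)] at h3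
          refine hbf ?_
          have h4 := congrArg Q.bar h3
          rw [Q.bar_invol] at h4
          exact h4.symm
  exact hR.2.2 α hnF1 hnF2

/-- (i) if `α` is a loop then `ζ_α = 0 = ξ_α`; (ii) if `f α` is a loop
then `ζ_α = 0`; (iii) if `g α` is a loop then `ξ_α = 0`. -/
theorem stmt7 (Q : TQ V A) (W : Weights Q) (h3 : 3 ≤ Fintype.card V) (hA : W.Assumption)
    {K : Type} [Field K] {Λ : Type} [Ring Λ] [Algebra K Λ]
    (D : AlgData Q W K Λ) (hR : D.Rels) (α : A) :
    (Q.IsLoop α →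
      D.x α * D.x (Q.f α) * D.x (Q.g (Q.f α)) = 0 ∧
      D.x α * D.x (Q.g α) * D.x (Q.f (Q.g α)) = 0) ∧
    (Q.IsLoop (Q.f α) → D.x α * D.x (Q.f α) * D.x (Q.g (Q.f α)) = 0) ∧
    (Q.IsLoop (Q.g α) → D.x α * D.x (Q.g α) * D.x (Q.f (Q.g α)) = 0) := by
  refine ⟨fun h => ⟨?_, ?_⟩, fun h => ?_, fun h => ?_⟩
  · exact stmt7_zeta_zero hA D hR α (Or.inl h)
  · exact stmt7_xi_zero hA D hR α (Or.inl h)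
  · exact stmt7_zeta_zero hA D hR α (Or.inr h)
  · exact stmt7_xi_zero hA D hR α (Or.inr h)
end

section
/- For every arrow α of Q, the elements B_α and B_ᾱ of Λ differ by a nonzero scalar; precisely, B_α = c_ᾱ c_α⁻¹ B_ᾱ. -/
variable {V A : Type} [Fintype V] [DecidableEq V] [Fintype A] [DecidableEq A]

variable {Q : TQ V A} {W : Weights Q} {K : Type} [Field K] {Λ : Type} [Ring Λ] [Algebra K Λ]

section Aux

variable {Q : TQ V A}

/-- `g` as a permutation of the arrows. -/
noncomputable def TQ.gPerm (Q : TQ V A) : Equiv.Perm A :=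
  Q.f.trans (Function.Involutive.toPerm Q.bar Q.bar_invol)

lemma TQ.gPerm_apply (Q : TQ V A) (a : A) : Q.gPerm a = Q.g a := rfl

lemma TQ.gPerm_coe (Q : TQ V A) : ⇑Q.gPerm = Q.g := funext (Q.gPerm_apply)

lemma TQ.g_injective (Q : TQ V A) : Function.Injective Q.g := by
  rw [← Q.gPerm_coe]; exact Q.gPerm.injective

lemma TQ.mem_periodicPts (Q : TQ V A) (a : A) : a ∈ Function.periodicPts Q.g := by
  refine ⟨orderOf Q.gPerm, orderOf_pos _, ?_⟩
  show Q.g^[orderOf Q.gPerm] a = a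
  rw [← Q.gPerm_coe, Equiv.Perm.iterate_eq_pow, pow_orderOf_eq_one]
  rfl

lemma TQ.n_pos (Q : TQ V A) (a : A) : 0 < Q.n a :=
  Function.minimalPeriod_pos_of_mem_periodicPts (Q.mem_periodicPts a)

lemma TQ.n_g (Q : TQ V A) (a : A) : Q.n (Q.g a) = Q.n a :=
  Function.minimalPeriod_apply (Q.mem_periodicPts a)

lemma TQ.g_iterate_period {Q : TQ V A} (W : Weights Q) (a : A) :
    Q.g^[W.m a * Q.n a] a = a :=
  ((Function.isPeriodicPt_minimalPeriod Q.g a).const_mul (W.m a)).eq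

variable {W : Weights Q} {K : Type} [Field K] {Λ : Type} [Ring Λ] [Algebra K Λ]

lemma mn_pos (W : Weights Q) (a : A) : 0 < W.m a * Q.n a :=
  Nat.mul_pos (W.m_pos a) (Q.n_pos a)

lemma mn_g (W : Weights Q) (a : A) :
    W.m (Q.g a) * Q.n (Q.g a) = W.m a * Q.n a := by
  rw [W.m_g, Q.n_g]

lemma B_eq_x_mul_Apath (D : AlgData Q W K Λ) (a : A) :
    D.B a = D.x a * D.Apath (Q.g a) := by
  obtain ⟨k, hk⟩ : ∃ k, W.m a * Q.n a = k + 1 :=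
    ⟨W.m a * Q.n a - 1, by have := mn_pos W a; omega⟩
  rw [AlgData.B, AlgData.Apath, mn_g, hk, Nat.add_sub_cancel,
    List.range_succ_eq_map, List.map_cons, List.prod_cons, Function.iterate_zero_apply,
    List.map_map]
  exact congrArg (D.x a * ·) (congrArg List.prod (List.map_congr_left fun j _ => by
    rw [Function.comp_apply, Function.iterate_succ_apply]))

lemma B_eq_Apath_mul_x (D : AlgData Q W K Λ) (a : A) :
    D.B a = D.Apath a * D.x (Q.g^[W.m a * Q.n a - 1] a) := by
  obtain ⟨k, hk⟩ : ∃ k, W.m a * Q.n a = k + 1 :=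
    ⟨W.m a * Q.n a - 1, by have := mn_pos W a; omega⟩
  rw [AlgData.B, AlgData.Apath, hk, Nat.add_sub_cancel, List.range_succ, List.map_append,
    List.prod_append, List.map_singleton, List.prod_singleton]

lemma g_iterate_pred_bar (W : Weights Q) (a : A) :
    Q.g^[W.m (Q.bar a) * Q.n (Q.bar a) - 1] (Q.bar a) = Q.f (Q.f a) := by
  apply Q.g_injective
  have h1 : Q.g (Q.g^[W.m (Q.bar a) * Q.n (Q.bar a) - 1] (Q.bar a)) = Q.bar a := by
    rw [← Function.iterate_succ_apply' Q.g _ (Q.bar a)]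
    have := mn_pos W (Q.bar a)
    have hk : W.m (Q.bar a) * Q.n (Q.bar a) - 1 + 1 = W.m (Q.bar a) * Q.n (Q.bar a) := by
      omega
    rw [Nat.succ_eq_add_one, hk]
    exact TQ.g_iterate_period W (Q.bar a)
  rw [h1]
  show Q.bar a = Q.bar (Q.f (Q.f (Q.f a)))
  rw [Q.f_cube]

end Aux

/-- `B_α = c_ᾱ c_α⁻¹ B_ᾱ` for every arrow `α`. -/
theorem stmt8 (Q : TQ V A) (W : Weights Q) (h3 : 3 ≤ Fintype.card V) (hA : W.Assumption)
    {K : Type} [Field K] {Λ : Type} [Ring Λ] [Algebra K Λ]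
    (D : AlgData Q W K Λ) (hR : D.Rels) (α : A) :
    D.B α = (D.c (Q.bar α) * (D.c α)⁻¹) • D.B (Q.bar α) := by
  have hR1 := hR.1
  -- Step 1: c α • B α = x α * (x (f α) * x (f (f α)))
  have h2 : D.c α • D.Apath (Q.g α) = D.x (Q.f α) * D.x (Q.f (Q.f α)) := by
    have := hR1 (Q.f α)
    have hc : D.c (Q.bar (Q.f α)) = D.c α := D.c_g α
    rw [hc] at this
    exact this.symm
  have h3' : D.c α • D.B α = D.x α * D.x (Q.f α) * D.x (Q.f (Q.f α)) := by
    rw [B_eq_x_mul_Apath D α, ← mul_smul_comm, h2, ← mul_assoc]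
  -- Step 2: rewrite via (R1) at α and the last-factor identification
  have h4 : D.c α • D.B α = D.c (Q.bar α) • D.B (Q.bar α) := by
    rw [h3', hR1 α, smul_mul_assoc, B_eq_Apath_mul_x D (Q.bar α), g_iterate_pred_bar W α]
  -- Conclude
  have hcne := D.c_ne α
  calc D.B α = (D.c α)⁻¹ • (D.c α • D.B α) := by
        rw [smul_smul, inv_mul_cancel₀ hcne, one_smul]
    _ = (D.c (Q.bar α) * (D.c α)⁻¹) • D.B (Q.bar α) := by
        rw [h4, smul_smul, mul_comm]
end

section
/- Let α be an arrow such that neither α nor f(α) is a loop, and set ζ_α = x_α x_{f(α)} x_{g(f(α))} in Λ. Then: (a) if ᾱ is virtual, then ζ_α = c_ᾱ c_α A_α; (b) if n_ᾱ = 3 = m_ᾱ n_ᾱ and f(ᾱ) is virtual, then ζ_α = c_ᾱ c_{f(ᾱ)} c_α A_α. -/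
variable {V A : Type} [Fintype V] [DecidableEq V] [Fintype A] [DecidableEq A]

variable {Q : TQ V A} {W : Weights Q} {K : Type} [Field K] {Λ : Type} [Ring Λ] [Algebra K Λ]

/-- If `b` is virtual, `A_b = x_b`. -/
lemma Apath_virtual (D : AlgData Q W K Λ) (b : A) (h : W.m b * Q.n b = 2) :
    D.Apath b = D.x b := by
  unfold AlgData.Apath
  rw [h]
  simp [List.range_succ]

lemma g_iterate_n (Q : TQ V A) (b : A) : Q.g^[Q.n b] b = b :=
  Function.iterate_minimalPeriod

/-- for `α` with neither `α` nor `f α` a loop: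
(a) if `ᾱ` is virtual then `ζ_α = c_ᾱ c_α A_α`;
(b) if `n ᾱ = 3 = m ᾱ * n ᾱ` and `f ᾱ` is virtual then `ζ_α = c_ᾱ c_{f ᾱ} c_α A_α`. -/
theorem stmt9 (Q : TQ V A) (W : Weights Q) (h3 : 3 ≤ Fintype.card V) (hA : W.Assumption)
    {K : Type} [Field K] {Λ : Type} [Ring Λ] [Algebra K Λ]
    (D : AlgData Q W K Λ) (hR : D.Rels) (α : A)
    (h1 : ¬ Q.IsLoop α) (h2 : ¬ Q.IsLoop (Q.f α)) :
    (W.Virtual (Q.bar α) →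
      D.x α * D.x (Q.f α) * D.x (Q.g (Q.f α)) = (D.c (Q.bar α) * D.c α) • D.Apath α) ∧
    (Q.n (Q.bar α) = 3 → W.m (Q.bar α) * Q.n (Q.bar α) = 3 → W.Virtual (Q.f (Q.bar α)) →
      D.x α * D.x (Q.f α) * D.x (Q.g (Q.f α)) =
        (D.c (Q.bar α) * D.c (Q.f (Q.bar α)) * D.c α) • D.Apath α) := by
  obtain ⟨hR1, -, -⟩ := hR
  have hbarβ : Q.bar (Q.bar α) = α := Q.bar_invol α
  constructor
  · intro hv
    have hApβ : D.Apath (Q.bar α) = D.x (Q.bar α) := Apath_virtual D _ hv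
    have hncase : Q.n (Q.bar α) = 1 ∨ Q.n (Q.bar α) = 2 := by
      have hdvd : Q.n (Q.bar α) ∣ 2 := ⟨W.m (Q.bar α), by rw [mul_comm]; exact hv.symm⟩
      exact (Nat.dvd_prime Nat.prime_two).mp hdvd
    have hkey : Q.g (Q.f α) = Q.f (Q.bar α) := by
      rcases hncase with hn | hn
      · have hit := g_iterate_n Q (Q.bar α)
        rw [hn] at hit
        simp only [Function.iterate_one] at hit
        -- hit : Q.g (Q.bar α) = Q.bar α, i.e. bar (f (bar α)) = bar α
        have hfβ : Q.f (Q.bar α) = α := by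
          have := congrArg Q.bar hit
          rw [show Q.g (Q.bar α) = Q.bar (Q.f (Q.bar α)) from rfl, Q.bar_invol, hbarβ] at this
          exact this
        have hffα : Q.f (Q.f α) = Q.bar α := by
          conv_lhs => rw [← hfβ]
          exact Q.f_cube (Q.bar α)
        show Q.bar (Q.f (Q.f α)) = Q.f (Q.bar α)
        rw [hffα, hbarβ, hfβ]
      · have hit := g_iterate_n Q (Q.bar α)
        rw [hn] at hit
        simp only [Function.iterate_succ, Function.iterate_zero, Function.comp_apply,
          id_eq] at hit
        -- hit : Q.g (Q.g (Q.bar α)) = Q.bar α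
        have hfg : Q.f (Q.g (Q.bar α)) = α := by
          have := congrArg Q.bar hit
          rw [show Q.g (Q.g (Q.bar α)) = Q.bar (Q.f (Q.g (Q.bar α))) from rfl,
            Q.bar_invol, hbarβ] at this
          exact this
        have h4 : Q.f (Q.f α) = Q.g (Q.bar α) := by
          conv_lhs => rw [← hfg]
          exact Q.f_cube (Q.g (Q.bar α))
        show Q.bar (Q.f (Q.f α)) = Q.f (Q.bar α)
        rw [h4]
        exact Q.bar_invol (Q.f (Q.bar α))
    calc D.x α * D.x (Q.f α) * D.x (Q.g (Q.f α))
        = (D.c (Q.bar α) • D.Apath (Q.bar α)) * D.x (Q.f (Q.bar α)) := by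
          rw [hR1 α, hkey]
      _ = D.c (Q.bar α) • (D.x (Q.bar α) * D.x (Q.f (Q.bar α))) := by
          rw [hApβ, smul_mul_assoc]
      _ = D.c (Q.bar α) • (D.c α • D.Apath α) := by rw [hR1 (Q.bar α), hbarβ]
      _ = (D.c (Q.bar α) * D.c α) • D.Apath α := (mul_smul _ _ _).symm
  · intro hn3 hmn3 hvf
    have hApβ : D.Apath (Q.bar α) = D.x (Q.bar α) * (D.x (Q.g (Q.bar α)) * 1) := by
      unfold AlgData.Apath
      rw [hmn3]
      simp [List.range_succ]
    have hit := g_iterate_n Q (Q.bar α)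
    rw [hn3] at hit
    simp only [Function.iterate_succ, Function.iterate_zero, Function.comp_apply,
      id_eq] at hit
    -- hit : Q.g (Q.g (Q.g (Q.bar α))) = Q.bar α
    have hfg2 : Q.f (Q.g (Q.g (Q.bar α))) = α := by
      have := congrArg Q.bar hit
      rw [show Q.g (Q.g (Q.g (Q.bar α))) = Q.bar (Q.f (Q.g (Q.g (Q.bar α)))) from rfl,
        Q.bar_invol, hbarβ] at this
      exact this
    have h4 : Q.f (Q.f α) = Q.g (Q.g (Q.bar α)) := by
      conv_lhs => rw [← hfg2]
      exact Q.f_cube (Q.g (Q.g (Q.bar α)))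
    have hkey : Q.g (Q.f α) = Q.f (Q.g (Q.bar α)) := by
      show Q.bar (Q.f (Q.f α)) = Q.f (Q.g (Q.bar α))
      rw [h4]
      exact Q.bar_invol (Q.f (Q.g (Q.bar α)))
    have hbargβ : Q.bar (Q.g (Q.bar α)) = Q.f (Q.bar α) := Q.bar_invol (Q.f (Q.bar α))
    have hApfβ : D.Apath (Q.f (Q.bar α)) = D.x (Q.f (Q.bar α)) := Apath_virtual D _ hvf
    calc D.x α * D.x (Q.f α) * D.x (Q.g (Q.f α))
        = (D.c (Q.bar α) • D.Apath (Q.bar α)) * D.x (Q.f (Q.g (Q.bar α))) := by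
          rw [hR1 α, hkey]
      _ = D.c (Q.bar α) • (D.x (Q.bar α) *
            (D.x (Q.g (Q.bar α)) * D.x (Q.f (Q.g (Q.bar α))))) := by
          rw [hApβ, smul_mul_assoc, mul_one, mul_assoc]
      _ = D.c (Q.bar α) • (D.x (Q.bar α) *
            (D.c (Q.f (Q.bar α)) • D.Apath (Q.f (Q.bar α)))) := by
          rw [hR1 (Q.g (Q.bar α)), hbargβ]
      _ = D.c (Q.bar α) • (D.c (Q.f (Q.bar α)) •
            (D.x (Q.bar α) * D.x (Q.f (Q.bar α)))) := by
          rw [hApfβ, mul_smul_comm]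
      _ = D.c (Q.bar α) • (D.c (Q.f (Q.bar α)) • (D.c α • D.Apath α)) := by
          rw [hR1 (Q.bar α), hbarβ]
      _ = (D.c (Q.bar α) * D.c (Q.f (Q.bar α)) * D.c α) • D.Apath α := by
          rw [← smul_smul, ← smul_smul]
end

section
/- Let α be an arrow such that neither α nor g(α) is a loop, and set ξ_α = x_α x_{g(α)} x_{f(g(α))} in Λ. Then: (a) if f(α) is virtual, then ξ_α = c_{f(α)} c_ᾱ A_ᾱ; (b) if n_{f(α)} m_{f(α)} = 3 = n_{f(α)} and ᾱ is virtual, then ξ_α = c_{f(α)} c_ᾱ c_α A_α. -/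
variable {V A : Type} [Fintype V] [DecidableEq V] [Fintype A] [DecidableEq A]

variable {Q : TQ V A} {W : Weights Q} {K : Type} [Field K] {Λ : Type} [Ring Λ] [Algebra K Λ]

/-- for `α` with neither `α` nor `g α` a loop:
(a) if `f α` is virtual then `ξ_α = c_{f α} c_ᾱ A_ᾱ`;
(b) if `n (f α) * m (f α) = 3 = n (f α)` and `ᾱ` is virtual
then `ξ_α = c_{f α} c_ᾱ c_α A_α`. -/
theorem stmt10 (Q : TQ V A) (W : Weights Q) (h3 : 3 ≤ Fintype.card V) (hA : W.Assumption)
    {K : Type} [Field K] {Λ : Type} [Ring Λ] [Algebra K Λ]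
    (D : AlgData Q W K Λ) (hR : D.Rels) (α : A)
    (h1 : ¬ Q.IsLoop α) (h2 : ¬ Q.IsLoop (Q.g α)) :
    (W.Virtual (Q.f α) →
      D.x α * D.x (Q.g α) * D.x (Q.f (Q.g α)) =
        (D.c (Q.f α) * D.c (Q.bar α)) • D.Apath (Q.bar α)) ∧
    (Q.n (Q.f α) * W.m (Q.f α) = 3 → Q.n (Q.f α) = 3 → W.Virtual (Q.bar α) →
      D.x α * D.x (Q.g α) * D.x (Q.f (Q.g α)) =
        (D.c (Q.f α) * D.c (Q.bar α) * D.c α) • D.Apath α) := by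
  obtain ⟨R1, R2, R3⟩ := hR
  have hbarg : ∀ a : A, Q.bar (Q.g a) = Q.f a := fun a => Q.bar_invol (Q.f a)
  have hApath1 : ∀ a : A, W.m a * Q.n a = 2 → D.Apath a = D.x a := by
    intro a h
    rw [AlgData.Apath, h]
    simp [List.range_succ]
  have key : ∀ a : A, D.x (Q.g a) * D.x (Q.f (Q.g a)) = D.c (Q.f a) • D.Apath (Q.f a) := by
    intro a
    rw [R1 (Q.g a), hbarg]
  constructor
  · intro hv
    rw [mul_assoc, key, hApath1 _ hv, mul_smul_comm, R1, smul_smul]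
  · intro hm3 _hn3 hvb
    have hmn : W.m (Q.f α) * Q.n (Q.f α) = 3 := by rw [mul_comm]; exact hm3
    have hper : Q.g^[2] (Q.bar α) = Q.bar α := by
      have hdvd : Q.n (Q.bar α) ∣ 2 := Dvd.intro_left _ hvb
      exact (Function.isPeriodicPt_iff_minimalPeriod_dvd.mpr hdvd)
    have hfg : Q.f (Q.g (Q.bar α)) = α := by
      have h' : Q.bar (Q.f (Q.g (Q.bar α))) = Q.bar α := by
        simpa [Function.iterate_succ_apply', TQ.g] using hper
      have := congrArg Q.bar h'
      rwa [Q.bar_invol, Q.bar_invol] at this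
    have hgb : Q.g (Q.bar α) = Q.f (Q.f α) := by
      have h'' := congrArg (fun z => Q.f (Q.f z)) hfg
      simp only [Q.f_cube] at h''
      exact h''
    have hgf : Q.g (Q.f α) = Q.f (Q.bar α) := by
      rw [TQ.g, ← hgb, TQ.g, Q.bar_invol]
    have hApathf : D.Apath (Q.f α) = D.x (Q.f α) * D.x (Q.g (Q.f α)) := by
      rw [AlgData.Apath, hmn]
      simp [List.range_succ]
    rw [mul_assoc, key, hApathf, mul_smul_comm, ← mul_assoc, R1, hApath1 _ hvb,
      smul_mul_assoc, hgf, R1 (Q.bar α), Q.bar_invol, smul_smul, smul_smul, mul_assoc]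
end

section
/- Let α be an arrow such that ᾱ is virtual and ᾱ is not a loop, and let β be the arrow with g(β) = f²(ᾱ). Then the following six products vanish in Λ: x_ᾱ x_{f(ᾱ)} x_{g(f(ᾱ))} = 0, x_{f²(ᾱ)} x_ᾱ x_{f²(α)} = 0, x_{f(α)} x_{f²(α)} x_ᾱ = 0, x_{f²(α)} x_ᾱ x_{f(ᾱ)} = 0, x_ᾱ x_{f²(α)} x_α = 0, and x_β x_{f²(ᾱ)} x_ᾱ = 0. -/
variable {V A : Type} [Fintype V] [DecidableEq V] [Fintype A] [DecidableEq A]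

variable {Q : TQ V A} {W : Weights Q} {K : Type} [Field K] {Λ : Type} [Ring Λ] [Algebra K Λ]

/-- if `ᾱ` is virtual and not a loop, and `β` is the arrow with
`g β = f² ᾱ`, then the six indicated products of type `ζ` or `ξ` vanish in `Λ`. -/
theorem stmt11 (Q : TQ V A) (W : Weights Q) (h3 : 3 ≤ Fintype.card V) (hA : W.Assumption)
    {K : Type} [Field K] {Λ : Type} [Ring Λ] [Algebra K Λ]
    (D : AlgData Q W K Λ) (hR : D.Rels) (α β : A)
    (hv : W.Virtual (Q.bar α)) (hl : ¬ Q.IsLoop (Q.bar α))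
    (hβ : Q.g β = Q.f (Q.f (Q.bar α))) :
    D.x (Q.bar α) * D.x (Q.f (Q.bar α)) * D.x (Q.g (Q.f (Q.bar α))) = 0 ∧
    D.x (Q.f (Q.f (Q.bar α))) * D.x (Q.bar α) * D.x (Q.f (Q.f α)) = 0 ∧
    D.x (Q.f α) * D.x (Q.f (Q.f α)) * D.x (Q.bar α) = 0 ∧
    D.x (Q.f (Q.f α)) * D.x (Q.bar α) * D.x (Q.f (Q.bar α)) = 0 ∧
    D.x (Q.bar α) * D.x (Q.f (Q.f α)) * D.x α = 0 ∧
    D.x β * D.x (Q.f (Q.f (Q.bar α))) * D.x (Q.bar α) = 0 := by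
  obtain ⟨hR1, hR2, hR3⟩ := hR
  have hfinj : Function.Injective Q.f := Q.f.injective
  have hbar : ∀ a, Q.bar (Q.bar a) = a := Q.bar_invol
  -- positivity of n and periodicity
  have hnpos : ∀ a, 0 < Q.n a := by
    intro a
    have h2 := hA.1 a
    rcases Nat.eq_zero_or_pos (Q.n a) with h | h
    · rw [h, mul_zero] at h2; omega
    · exact h
  have hper : ∀ a, a ∈ Function.periodicPts Q.g := fun a =>
    Function.minimalPeriod_pos_iff_mem_periodicPts.mp (hnpos a)
  have hit : ∀ a, Q.g^[Q.n a] a = a := fun a => Function.iterate_minimalPeriod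
  have hng : ∀ a, Q.n (Q.g a) = Q.n a := fun a => Function.minimalPeriod_apply (hper a)
  have hmng : ∀ a, W.m (Q.g a) * Q.n (Q.g a) = W.m a * Q.n a := fun a => by
    rw [W.m_g, hng]
  have hv' : W.m (Q.bar α) * Q.n (Q.bar α) = 2 := hv
  -- n (bar α) = 2
  have hnb : Q.n (Q.bar α) = 2 := by
    have hdvd : Q.n (Q.bar α) ∣ 2 := ⟨W.m (Q.bar α), by rw [← hv', Nat.mul_comm]⟩
    rcases Nat.prime_two.eq_one_or_self_of_dvd _ hdvd with h1 | h2
    · exfalso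
      have h := hit (Q.bar α)
      rw [h1] at h
      have hgb1 : Q.bar (Q.f (Q.bar α)) = Q.bar α := by simp at h; exact h
      have hfb1 : Q.f (Q.bar α) = α := by
        have := congrArg Q.bar hgb1
        rwa [hbar, hbar] at this
      exact hl (by rw [TQ.IsLoop, Q.t_eq, hfb1, Q.s_bar])
    · exact h2
  have hg2b : Q.g (Q.g (Q.bar α)) = Q.bar α := by
    have h := hit (Q.bar α)
    rw [hnb] at h
    simpa using h
  -- g (bar α) = f (f α)
  have hgb : Q.g (Q.bar α) = Q.f (Q.f α) := by
    apply hfinj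
    have h1 : Q.bar (Q.f (Q.g (Q.bar α))) = Q.bar α := hg2b
    have h2 : Q.f (Q.g (Q.bar α)) = α := by
      have := congrArg Q.bar h1
      rwa [hbar, hbar] at this
    rw [h2, Q.f_cube]
  have hbarfb : Q.bar (Q.f (Q.bar α)) = Q.f (Q.f α) := hgb
  have hfb_eq : Q.f (Q.bar α) = Q.bar (Q.f (Q.f α)) := by
    rw [← hbarfb, hbar]
  -- f (f α) is virtual
  have hvffα : W.m (Q.f (Q.f α)) * Q.n (Q.f (Q.f α)) = 2 := by
    have h := hmng (Q.bar α)
    rw [hgb] at h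
    rw [h]; exact hv'
  have hα3 : 3 ≤ W.m α * Q.n α := hA.2.1 α hv hl
  have hαnv : ¬ W.Virtual α := fun h => by
    have h' : W.m α * Q.n α = 2 := h
    omega
  -- f (bar α) ≠ bar α
  have hfbne : Q.f (Q.bar α) ≠ Q.bar α := by
    intro h
    exact hl (by rw [TQ.IsLoop, Q.t_eq, h])
  -- f (bar α) is not a loop
  have hfbnl : ¬ Q.IsLoop (Q.f (Q.bar α)) := by
    intro h
    rw [TQ.IsLoop, Q.t_eq] at h
    rcases Q.bar_complete (Q.f (Q.bar α)) (Q.f (Q.f (Q.bar α))) h.symm with h1 | h1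
    · exact hfbne (hfinj h1)
    · rw [hbarfb] at h1
      exact Q.bar_ne α (hfinj (hfinj h1))
  -- f (bar α) is not virtual
  have hfbnv : ¬ W.Virtual (Q.f (Q.bar α)) := by
    intro h
    have hbv : W.Virtual (Q.bar (Q.f (Q.f α))) := by rw [← hfb_eq]; exact h
    have hbl : ¬ Q.IsLoop (Q.bar (Q.f (Q.f α))) := by rw [← hfb_eq]; exact hfbnl
    have h3' := hA.2.1 (Q.f (Q.f α)) hbv hbl
    omega
  -- g (f α) = f (bar α)
  have hgfα : Q.g (Q.f α) = Q.f (Q.bar α) := by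
    show Q.bar (Q.f (Q.f α)) = Q.f (Q.bar α)
    rw [← hfb_eq]
  -- f α is not virtual
  have hfαnv : ¬ W.Virtual (Q.f α) := by
    intro h
    apply hfbnv
    have h' : W.m (Q.f α) * Q.n (Q.f α) = 2 := h
    have h2 := hmng (Q.f α)
    rw [hgfα] at h2
    show W.m (Q.f (Q.bar α)) * Q.n (Q.f (Q.bar α)) = 2
    rw [h2]; exact h'
  -- g (f (f (bar α))) = α
  have hgffb : Q.g (Q.f (Q.f (Q.bar α))) = α := by
    show Q.bar (Q.f (Q.f (Q.f (Q.bar α)))) = α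
    rw [Q.f_cube, hbar]
  -- f (f (bar α)) is not virtual
  have hffbnv : ¬ W.Virtual (Q.f (Q.f (Q.bar α))) := by
    intro h
    apply hαnv
    have h' : W.m (Q.f (Q.f (Q.bar α))) * Q.n (Q.f (Q.f (Q.bar α))) = 2 := h
    have h2 := hmng (Q.f (Q.f (Q.bar α)))
    rw [hgffb] at h2
    show W.m α * Q.n α = 2
    rw [h2]; exact h'
  -- the main exceptional configuration, refuted
  have hE : ¬ (W.Virtual (Q.f (Q.bar (Q.f (Q.f (Q.bar α))))) ∧
      W.m (Q.bar (Q.f (Q.f (Q.bar α)))) = 1 ∧ Q.n (Q.bar (Q.f (Q.f (Q.bar α)))) = 3) := by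
    rintro ⟨hvδ, hm1, hn3⟩
    have h3p : Q.g (Q.g (Q.g (Q.bar (Q.f (Q.f (Q.bar α)))))) = Q.bar (Q.f (Q.f (Q.bar α))) := by
      have h := hit (Q.bar (Q.f (Q.f (Q.bar α))))
      rw [hn3] at h
      simpa using h
    have h1 : Q.f (Q.g (Q.g (Q.bar (Q.f (Q.f (Q.bar α)))))) = Q.f (Q.f (Q.bar α)) := by
      have h1' : Q.bar (Q.f (Q.g (Q.g (Q.bar (Q.f (Q.f (Q.bar α))))))) =
          Q.bar (Q.f (Q.f (Q.bar α))) := h3p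
      have := congrArg Q.bar h1'
      rwa [hbar, hbar] at this
    have h2 : Q.g (Q.g (Q.bar (Q.f (Q.f (Q.bar α))))) = Q.f (Q.bar α) := hfinj h1
    have h3 : Q.f (Q.g (Q.bar (Q.f (Q.f (Q.bar α))))) = Q.f (Q.f α) := by
      have h3' : Q.bar (Q.f (Q.g (Q.bar (Q.f (Q.f (Q.bar α)))))) = Q.f (Q.bar α) := h2
      have := congrArg Q.bar h3'
      rw [hbar] at this
      rw [this, hbarfb]
    have h4 : Q.g (Q.bar (Q.f (Q.f (Q.bar α)))) = Q.f α := hfinj h3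
    have h5 : Q.g α = Q.f (Q.bar (Q.f (Q.f (Q.bar α)))) := by
      show Q.bar (Q.f α) = Q.f (Q.bar (Q.f (Q.f (Q.bar α))))
      rw [← h4]
      exact hbar _
    have h6 := hmng α
    rw [h5] at h6
    have hvδ' : W.m (Q.f (Q.bar (Q.f (Q.f (Q.bar α))))) *
        Q.n (Q.f (Q.bar (Q.f (Q.f (Q.bar α))))) = 2 := hvδ
    omega
  -- bar (f (f (bar α))) is not virtual
  have hδnv : ¬ W.Virtual (Q.bar (Q.f (Q.f (Q.bar α)))) := by
    intro hvδ
    have hvδ' : W.m (Q.bar (Q.f (Q.f (Q.bar α)))) * Q.n (Q.bar (Q.f (Q.f (Q.bar α)))) = 2 := hvδ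
    have hdvd : Q.n (Q.bar (Q.f (Q.f (Q.bar α)))) ∣ 2 :=
      ⟨W.m (Q.bar (Q.f (Q.f (Q.bar α)))), by rw [← hvδ', Nat.mul_comm]⟩
    rcases Nat.prime_two.eq_one_or_self_of_dvd _ hdvd with h1 | h2
    · -- n δ = 1 : δ = f (bar α), so f (bar α) is a loop
      have h := hit (Q.bar (Q.f (Q.f (Q.bar α))))
      rw [h1] at h
      have hfix : Q.bar (Q.f (Q.bar (Q.f (Q.f (Q.bar α))))) = Q.bar (Q.f (Q.f (Q.bar α))) := by
        simp at h; exact h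
      have hfd : Q.f (Q.bar (Q.f (Q.f (Q.bar α)))) = Q.f (Q.f (Q.bar α)) := by
        have := congrArg Q.bar hfix
        rwa [hbar, hbar] at this
      have hδfb : Q.bar (Q.f (Q.f (Q.bar α))) = Q.f (Q.bar α) := hfinj hfd
      apply hfbnl
      show Q.s (Q.f (Q.bar α)) = Q.t (Q.f (Q.bar α))
      rw [Q.t_eq]
      conv_lhs => rw [← hδfb, Q.s_bar]
    · -- n δ = 2 : g δ = f (bar α), so f (bar α) is virtual
      have h := hit (Q.bar (Q.f (Q.f (Q.bar α))))
      rw [h2] at h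
      have hg2 : Q.g (Q.g (Q.bar (Q.f (Q.f (Q.bar α))))) = Q.bar (Q.f (Q.f (Q.bar α))) := by
        simpa using h
      have h1' : Q.bar (Q.f (Q.g (Q.bar (Q.f (Q.f (Q.bar α)))))) =
          Q.bar (Q.f (Q.f (Q.bar α))) := hg2
      have h1'' : Q.f (Q.g (Q.bar (Q.f (Q.f (Q.bar α))))) = Q.f (Q.f (Q.bar α)) := by
        have := congrArg Q.bar h1'
        rwa [hbar, hbar] at this
      have hgδ : Q.g (Q.bar (Q.f (Q.f (Q.bar α)))) = Q.f (Q.bar α) := hfinj h1''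
      apply hfbnv
      have h6 := hmng (Q.bar (Q.f (Q.f (Q.bar α))))
      rw [hgδ] at h6
      show W.m (Q.f (Q.bar α)) * Q.n (Q.f (Q.bar α)) = 2
      rw [h6]; exact hvδ'
  -- exceptional configuration for the third product, refuted
  have hE3 : ¬ (W.Virtual (Q.f (Q.bar (Q.f α))) ∧
      W.m (Q.bar (Q.f α)) = 1 ∧ Q.n (Q.bar (Q.f α)) = 3) := by
    rintro ⟨hv3, hm1, hn3⟩
    have hnα3 : Q.n α = 3 := by
      have h := hng α
      have h' : Q.n (Q.bar (Q.f α)) = Q.n α := h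
      omega
    have h3p : Q.g (Q.g (Q.g α)) = α := by
      have h := hit α
      rw [hnα3] at h
      simpa using h
    have h1 : Q.f (Q.g (Q.g α)) = Q.bar α := by
      have h1' : Q.bar (Q.f (Q.g (Q.g α))) = α := h3p
      have := congrArg Q.bar h1'
      rwa [hbar] at this
    have h2 : Q.g (Q.g α) = Q.f (Q.f (Q.bar α)) := by
      apply hfinj
      rw [h1, Q.f_cube]
    have h3 : Q.f (Q.g α) = Q.bar (Q.f (Q.f (Q.bar α))) := by
      have h3' : Q.bar (Q.f (Q.g α)) = Q.f (Q.f (Q.bar α)) := h2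
      have := congrArg Q.bar h3'
      rwa [hbar] at this
    apply hδnv
    rw [← h3]
    exact hv3
  refine ⟨?_, ?_, ?_, ?_, ?_, ?_⟩
  · -- (1) R2 at bar α
    apply hR2 (Q.bar α) hffbnv
    rintro ⟨h1, -, -⟩
    rw [hbar] at h1
    exact hfαnv h1
  · -- (2) R2 at f (f (bar α))
    have h := hR2 (Q.f (Q.f (Q.bar α)))
      (by rw [Q.f_cube]; exact hfbnv)
      hE
    rw [Q.f_cube] at h
    rwa [hgb] at h
  · -- (3) R2 at f α
    have h := hR2 (Q.f α)
      (by rw [Q.f_cube]; exact hαnv)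
      hE3
    have hgffα : Q.g (Q.f (Q.f α)) = Q.bar α := by
      show Q.bar (Q.f (Q.f (Q.f α))) = Q.bar α
      rw [Q.f_cube]
    rwa [hgffα] at h
  · -- (4) R3 at f (f α)
    have hgffα : Q.g (Q.f (Q.f α)) = Q.bar α := by
      show Q.bar (Q.f (Q.f (Q.f α))) = Q.bar α
      rw [Q.f_cube]
    have h := hR3 (Q.f (Q.f α))
      (by rw [Q.f_cube]; exact hαnv)
      (by
        rw [Q.f_cube]
        rintro ⟨h1, -, -⟩
        exact hfαnv h1)
    rwa [hgffα] at h
  · -- (5) R3 at bar α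
    have h := hR3 (Q.bar α) hfbnv
      (by rintro ⟨h1, -, -⟩; exact hffbnv h1)
    rw [hgb] at h
    rwa [Q.f_cube] at h
  · -- (6) R3 at β
    have hfβ : Q.f β = Q.bar (Q.f (Q.f (Q.bar α))) := by
      have hβ' : Q.bar (Q.f β) = Q.f (Q.f (Q.bar α)) := hβ
      have := congrArg Q.bar hβ'
      rwa [hbar] at this
    have h := hR3 β
      (by rw [hfβ]; exact hδnv)
      (by rw [hfβ]; exact hE)
    rw [hβ] at h
    rwa [Q.f_cube] at h
end

section
/- Let α be an arrow such that ᾱ is a loop (s(ᾱ) = t(ᾱ)), f(ᾱ) = α, and ᾱ is virtual (so n_ᾱ = 1 and m_ᾱ = 2; by the Assumption m_α n_α ≥ 4). Let A'_α = x_{g(α)} x_{g²(α)} ⋯ x_{g^{m_α n_α − 2}(α)} (so that x_α A'_α = A_α), and set φ = x_{f(α)} x_α − c_ᾱ c_α A'_α in Λ. Then φ x_{f(α)} = 0. -/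
variable {V A : Type} [Fintype V] [DecidableEq V] [Fintype A] [DecidableEq A]

variable {Q : TQ V A} {W : Weights Q} {K : Type} [Field K] {Λ : Type} [Ring Λ] [Algebra K Λ]

/-- if `ᾱ` is a virtual loop with `f ᾱ = α`, and
`φ = x_{f α} x_α − c_ᾱ c_α A'_α` where `x_α A'_α = A_α`, then `φ x_{f α} = 0`. -/
theorem stmt18 (Q : TQ V A) (W : Weights Q) (h3 : 3 ≤ Fintype.card V) (hA : W.Assumption)
    {K : Type} [Field K] {Λ : Type} [Ring Λ] [Algebra K Λ]
    (D : AlgData Q W K Λ) (hR : D.Rels) (α : A)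
    (hloop : Q.IsLoop (Q.bar α)) (hf : Q.f (Q.bar α) = α)
    (hv : W.Virtual (Q.bar α)) :
    (D.x (Q.f α) * D.x α -
        (D.c (Q.bar α) * D.c α) •
          ((List.range (W.m α * Q.n α - 2)).map (fun k => D.x (Q.g^[k + 1] α))).prod) *
      D.x (Q.f α) = 0 := by

  obtain ⟨hR1, -, -⟩ := hR
  have hff : Q.f (Q.f α) = Q.bar α := by
    conv_rhs => rw [← Q.f_cube (Q.bar α), hf]
  have hgfα : Q.g (Q.f α) = α := by
    rw [TQ.g, hff, Q.bar_invol]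
  have ginj : Function.Injective Q.g := by
    intro x y h
    have h2 : Q.f x = Q.f y := by
      have := congrArg Q.bar h
      rwa [TQ.g, TQ.g, Q.bar_invol, Q.bar_invol] at this
    exact Q.f.injective h2
  have hmn2 : 2 ≤ W.m α * Q.n α := hA.1 α
  have hnpos : 0 < Q.n α := by
    rcases Nat.eq_zero_or_pos (Q.n α) with h | h
    · rw [h, Nat.mul_zero] at hmn2; omega
    · exact h
  have hfixn : Q.g^[Q.n α] α = α := Function.iterate_minimalPeriod
  have hfix : Q.g^[W.m α * Q.n α] α = α := by
    rw [mul_comm, Function.iterate_mul]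
    exact Function.iterate_fixed hfixn _
  have hlast : Q.g^[W.m α * Q.n α - 1] α = Q.f α := by
    apply ginj
    rw [hgfα]
    calc Q.g (Q.g^[W.m α * Q.n α - 1] α)
        = Q.g^[W.m α * Q.n α - 1 + 1] α := (Function.iterate_succ_apply' _ _ _).symm
      _ = α := by
          rw [Nat.sub_add_cancel (le_trans one_le_two hmn2)]
          exact hfix
  have hper : α ∈ Function.periodicPts Q.g := ⟨Q.n α, hnpos, hfixn⟩
  have hngα : Q.n (Q.g α) = Q.n α := Function.minimalPeriod_apply hper
  have hmn_g : W.m (Q.g α) * Q.n (Q.g α) = W.m α * Q.n α := by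
    rw [W.m_g, hngα]
  have hApb : D.Apath (Q.bar α) = D.x (Q.bar α) := by
    rw [AlgData.Apath, hv]
    norm_num [List.range_succ]
  have step1 : D.x α * D.x (Q.f α) = D.c (Q.bar α) • D.x (Q.bar α) := by
    rw [hR1 α, hApb]
  have step2 : D.x (Q.f α) * D.x (Q.bar α) = D.c α • D.Apath (Q.g α) := by
    have h := hR1 (Q.f α)
    rw [hff] at h
    rw [h]
    have hb : Q.bar (Q.f α) = Q.g α := rfl
    rw [hb, D.c_g]
  have step3 : D.Apath (Q.g α) =
      ((List.range (W.m α * Q.n α - 2)).map (fun k => D.x (Q.g^[k + 1] α))).prod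
        * D.x (Q.f α) := by
    rw [AlgData.Apath, hmn_g]
    have h1 : W.m α * Q.n α - 1 = (W.m α * Q.n α - 2) + 1 := by omega
    have hmap : (fun k => D.x (Q.g^[k] (Q.g α))) = (fun k => D.x (Q.g^[k + 1] α)) := by
      funext k
      rw [Function.iterate_succ_apply]
    rw [h1, List.range_succ, List.map_append, List.prod_append, hmap]
    congr 1
    simp only [List.map_cons, List.map_nil, List.prod_cons, List.prod_nil, mul_one]
    have h2 : W.m α * Q.n α - 2 + 1 = W.m α * Q.n α - 1 := by omega
    rw [h2, hlast]
  rw [sub_mul, smul_mul_assoc, mul_assoc, step1, mul_smul_comm, step2, smul_smul,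
    ← step3, sub_self]
end

section
/- Let α be an arrow such that ᾱ is virtual and ᾱ is not a loop. Let A'_α = x_{g(α)} x_{g²(α)} ⋯ x_{g^{m_α n_α − 2}(α)} (so that x_α A'_α = A_α), and set φ = x_{f(α)} x_{f(ᾱ)} − c_ᾱ c_α A'_α in Λ. Then φ x_{f²(ᾱ)} = 0. -/
variable {V A : Type} [Fintype V] [DecidableEq V] [Fintype A] [DecidableEq A]

variable {Q : TQ V A} {W : Weights Q} {K : Type} [Field K] {Λ : Type} [Ring Λ] [Algebra K Λ]

/-- if `ᾱ` is virtual and not a loop, and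
`φ = x_{f α} x_{f ᾱ} − c_ᾱ c_α A'_α` where `x_α A'_α = A_α`, then `φ x_{f² ᾱ} = 0`. -/
theorem stmt19 (Q : TQ V A) (W : Weights Q) (h3 : 3 ≤ Fintype.card V) (hA : W.Assumption)
    {K : Type} [Field K] {Λ : Type} [Ring Λ] [Algebra K Λ]
    (D : AlgData Q W K Λ) (hR : D.Rels) (α : A)
    (hv : W.Virtual (Q.bar α)) (hl : ¬ Q.IsLoop (Q.bar α)) :
    (D.x (Q.f α) * D.x (Q.f (Q.bar α)) -
        (D.c (Q.bar α) * D.c α) •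
          ((List.range (W.m α * Q.n α - 2)).map (fun k => D.x (Q.g^[k + 1] α))).prod) *
      D.x (Q.f (Q.f (Q.bar α))) = 0 := by
  obtain ⟨hR1, -, -⟩ := hR
  have hbar_inj : Function.Injective Q.bar := Function.Involutive.injective Q.bar_invol
  have hg_inj : Function.Injective Q.g := fun a b h => Q.f.injective (hbar_inj h)
  set N := W.m α * Q.n α with hNdef
  have hN : 2 ≤ N := hA.1 α
  have hnα : 0 < Q.n α := Nat.pos_of_ne_zero (by intro h; rw [hNdef, h, mul_zero] at hN; omega)
  have hαper : α ∈ Function.periodicPts Q.g :=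
    Function.minimalPeriod_pos_iff_mem_periodicPts.mp hnα
  have hvβ : W.m (Q.bar α) * Q.n (Q.bar α) = 2 := hv
  have hnβ : 0 < Q.n (Q.bar α) :=
    Nat.pos_of_ne_zero (by intro h; rw [h, mul_zero] at hvβ; omega)
  have hβper : Q.bar α ∈ Function.periodicPts Q.g :=
    Function.minimalPeriod_pos_iff_mem_periodicPts.mp hnβ
  have hβ2 : Q.g^[2] (Q.bar α) = Q.bar α := by
    have hd : Q.n (Q.bar α) ∣ 2 := ⟨W.m (Q.bar α), by rw [← hvβ, mul_comm]⟩
    exact (Function.isPeriodicPt_minimalPeriod Q.g (Q.bar α)).trans_dvd hd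
  have hggβ : Q.g (Q.g (Q.bar α)) = Q.bar α := by
    simpa [Function.iterate_succ_apply'] using hβ2
  have h1 : Q.f (Q.bar (Q.f (Q.bar α))) = α := by
    have h := congrArg Q.bar hggβ
    simp only [TQ.g] at h
    rw [Q.bar_invol, Q.bar_invol] at h
    exact h
  have hδ : Q.bar (Q.f (Q.bar α)) = Q.f (Q.f α) := by
    have h := congrArg (fun y => Q.f (Q.f y)) h1
    simpa [Q.f_cube] using h
  have hδ' : Q.g (Q.bar α) = Q.f (Q.f α) := hδ
  have hmδ : W.m (Q.f (Q.f α)) = W.m (Q.bar α) := by rw [← hδ']; exact W.m_g _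
  have hnδ : Q.n (Q.f (Q.f α)) = Q.n (Q.bar α) := by
    rw [← hδ']; exact Function.minimalPeriod_apply hβper
  have hcδ : D.c (Q.f (Q.f α)) = D.c (Q.bar α) := by rw [← hδ']; exact D.c_g _
  have hδ2 : W.m (Q.f (Q.f α)) * Q.n (Q.f (Q.f α)) = 2 := by rw [hmδ, hnδ]; exact hvβ
  have hApδ : D.Apath (Q.f (Q.f α)) = D.x (Q.f (Q.f α)) := by
    simp [AlgData.Apath, hδ2, List.range_succ]
  have hstep1 : D.x (Q.f (Q.bar α)) * D.x (Q.f (Q.f (Q.bar α))) =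
      D.c (Q.bar α) • D.x (Q.f (Q.f α)) := by
    have h := hR1 (Q.f (Q.bar α))
    rw [hδ, hApδ, hcδ] at h
    exact h
  have hgα : Q.g α = Q.bar (Q.f α) := rfl
  have hstep2 : D.x (Q.f α) * D.x (Q.f (Q.f α)) = D.c α • D.Apath (Q.g α) := by
    have h := hR1 (Q.f α)
    rw [← hgα, D.c_g] at h
    exact h
  have hmgα : W.m (Q.g α) = W.m α := W.m_g α
  have hngα : Q.n (Q.g α) = Q.n α := Function.minimalPeriod_apply hαper
  have hApgα : D.Apath (Q.g α) =
      ((List.range (N - 1)).map (fun k => D.x (Q.g^[k + 1] α))).prod := by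
    simp only [AlgData.Apath, hmgα, hngα, ← hNdef, ← Function.iterate_succ_apply]
  have hNper : Q.g^[N] α = α :=
    (Function.isPeriodicPt_minimalPeriod Q.g α).const_mul (W.m α)
  have hE4 : Q.f (Q.f (Q.bar α)) = Q.g^[N - 1] α := by
    apply hg_inj
    have ha : Q.g (Q.f (Q.f (Q.bar α))) = α := by
      show Q.bar (Q.f (Q.f (Q.f (Q.bar α)))) = α
      rw [Q.f_cube, Q.bar_invol]
    have hb : Q.g (Q.g^[N - 1] α) = α := by
      have hc : Q.g^[N - 1 + 1] α = α := by rw [show N - 1 + 1 = N by omega]; exact hNper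
      rwa [Function.iterate_succ_apply'] at hc
    rw [ha, hb]
  have hsplit : ((List.range (N - 1)).map (fun k => D.x (Q.g^[k + 1] α))).prod =
      (((List.range (N - 2)).map (fun k => D.x (Q.g^[k + 1] α))).prod) *
        D.x (Q.g^[N - 1] α) := by
    conv_lhs => rw [show N - 1 = N - 2 + 1 by omega, List.range_succ]
    rw [List.map_append, List.prod_append]
    simp only [List.map_cons, List.map_nil, List.prod_cons, List.prod_nil, mul_one]
    rw [show N - 2 + 1 = N - 1 by omega]
  rw [sub_mul, mul_assoc, hstep1, mul_smul_comm, hstep2, hApgα, hsplit,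
    smul_mul_assoc, hE4, smul_smul, sub_self]
end
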